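/- (Theorem 2) Let z, r, z', r' be real numbers with z² + r² ≤ 1 and z'² + r'² ≤ 1. There exists a finite family {K_n} of incoherent 2×2 complex matrices with ∑_n K_n† K_n = I and ∑_n K_n ρ(z,r) K_n† = ρ(z',r') if and only if r'²·(1 − z²) ≤ r²·(1 − z'²) and |r'| ≤ |r|. -/

import Mathlib

open Matrix

/-- A 2×2 complex matrix is incoherent if each of its columns has at most one
nonzero entry. -/
def Incoherent (K : Matrix (Fin 2) (Fin 2) ℂ) : Prop :=
  ∀ j i i' : Fin 2, K i j ≠ 0 → K i' j ≠ 0 → i = i'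

/-- The qubit state `ρ(z,r) = (1/2) [[1+z, r], [r, 1-z]]`. -/
noncomputable def qubit (z r : ℝ) : Matrix (Fin 2) (Fin 2) ℂ :=
  (1 / 2 : ℂ) • !![1 + (z : ℂ), (r : ℂ); (r : ℂ), 1 - (z : ℂ)]

open scoped ComplexConjugate

lemma qubit00 (z r : ℝ) : qubit z r 0 0 = (((1+z)/2 : ℝ) : ℂ) := by
  simp [qubit]; ring
lemma qubit01 (z r : ℝ) : qubit z r 0 1 = ((r/2 : ℝ) : ℂ) := by
  simp [qubit]; ring
lemma qubit10 (z r : ℝ) : qubit z r 1 0 = ((r/2 : ℝ) : ℂ) := by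
  simp [qubit]; ring
lemma qubit11 (z r : ℝ) : qubit z r 1 1 = (((1-z)/2 : ℝ) : ℂ) := by
  simp [qubit]; ring

set_option maxHeartbeats 1000000 in
lemma necessity (z r z' r' : ℝ) (hzr : z ^ 2 + r ^ 2 ≤ 1)
    (n : ℕ) (K : Fin n → Matrix (Fin 2) (Fin 2) ℂ)
    (hinc : ∀ i, Incoherent (K i))
    (h1 : ∑ i, (K i)ᴴ * K i = 1)
    (h2 : ∑ i, K i * qubit z r * (K i)ᴴ = qubit z' r') :
    r' ^ 2 * (1 - z ^ 2) ≤ r ^ 2 * (1 - z' ^ 2) ∧ |r'| ≤ |r| := by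
  set p := (1+z)/2 with hp_def
  set q := (1-z)/2 with hq_def
  have hz1 : z^2 ≤ 1 := by nlinarith [sq_nonneg r]
  have hp0 : 0 ≤ p := by rw [hp_def]; nlinarith [sq_nonneg (1+z)]
  have hq0 : 0 ≤ q := by rw [hq_def]; nlinarith [sq_nonneg (1-z)]
  have hpq : r^2 ≤ 4*(p*q) := by rw [hp_def, hq_def]; nlinarith
  -- incoherence facts
  have hAC : ∀ i, K i 0 0 = 0 ∨ K i 1 0 = 0 := by
    intro i
    by_cases hA : K i 0 0 = 0
    · exact Or.inl hA
    · by_cases hC : K i 1 0 = 0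
      · exact Or.inr hC
      · exact absurd (hinc i 0 0 1 hA hC) (by decide)
  have hBD : ∀ i, K i 0 1 = 0 ∨ K i 1 1 = 0 := by
    intro i
    by_cases hA : K i 0 1 = 0
    · exact Or.inl hA
    · by_cases hC : K i 1 1 = 0
      · exact Or.inr hC
      · exact absurd (hinc i 1 0 1 hA hC) (by decide)
  -- definitions
  set s : Fin n → ℂ := fun i => K i 0 0 * conj (K i 1 1) + K i 0 1 * conj (K i 1 0) with hs_def
  set α : Fin n → ℝ := fun i =>
    Complex.normSq (K i 0 0) * p + Complex.normSq (K i 0 1) * q + r * (K i 0 0 * conj (K i 0 1)).re with hα_def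
  set β : Fin n → ℝ := fun i =>
    Complex.normSq (K i 1 0) * p + Complex.normSq (K i 1 1) * q + r * (K i 1 0 * conj (K i 1 1)).re with hβ_def
  set u : Fin n → ℝ := fun i => ‖s i‖ with hu_def
  -- entry expansions of output
  have hent00 : ∀ i, (K i * qubit z r * (K i)ᴴ) 0 0 = ((α i : ℝ) : ℂ) := by
    intro i
    simp only [Matrix.mul_apply, Matrix.conjTranspose_apply, Fin.sum_univ_two,
      qubit00, qubit01, qubit10, qubit11, hα_def]
    simp [Complex.ext_iff, Complex.normSq_apply]
    constructor <;> ring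
  have hent11 : ∀ i, (K i * qubit z r * (K i)ᴴ) 1 1 = ((β i : ℝ) : ℂ) := by
    intro i
    simp only [Matrix.mul_apply, Matrix.conjTranspose_apply, Fin.sum_univ_two,
      qubit00, qubit01, qubit10, qubit11, hβ_def]
    simp [Complex.ext_iff, Complex.normSq_apply]
    constructor <;> ring
  have hent01 : ∀ i, (K i * qubit z r * (K i)ᴴ) 0 1 = ((r/2 : ℝ) : ℂ) * s i := by
    intro i
    simp only [Matrix.mul_apply, Matrix.conjTranspose_apply, Fin.sum_univ_two,
      qubit00, qubit01, qubit10, qubit11, hs_def]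
    rcases hAC i with h0 | h0 <;> rcases hBD i with h1' | h1' <;>
      (rw [h0, h1']; simp only [Complex.star_def, star_zero, map_zero, mul_zero, zero_mul, add_zero, zero_add]; try ring)
  -- summed equations
  have hsumα : ∑ i, α i = (1+z')/2 := by
    have h := congrFun (congrFun h2 0) 0
    rw [Matrix.sum_apply] at h
    simp only [hent00, qubit00] at h
    rw [← Complex.ofReal_sum] at h
    exact_mod_cast h
  have hsumβ : ∑ i, β i = (1-z')/2 := by
    have h := congrFun (congrFun h2 1) 1
    rw [Matrix.sum_apply] at h
    simp only [hent11, qubit11] at h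
    rw [← Complex.ofReal_sum] at h
    exact_mod_cast h
  have hsums : ((r : ℝ) : ℂ) * ∑ i, s i = ((r' : ℝ) : ℂ) := by
    have h := congrFun (congrFun h2 0) 1
    rw [Matrix.sum_apply] at h
    simp only [hent01, qubit01] at h
    rw [← Finset.mul_sum] at h
    push_cast at h ⊢
    linear_combination 2*h

  -- normalization sums
  have hnorm00 : ∑ i, (Complex.normSq (K i 0 0) + Complex.normSq (K i 1 0)) = 1 := by
    have h := congrFun (congrFun h1 0) 0
    rw [Matrix.sum_apply] at h
    have he : ∀ i, ((K i)ᴴ * K i) 0 0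
        = ((Complex.normSq (K i 0 0) + Complex.normSq (K i 1 0) : ℝ) : ℂ) := by
      intro i
      simp [Matrix.mul_apply, Matrix.conjTranspose_apply, Fin.sum_univ_two,
        Complex.ext_iff, Complex.normSq_apply, Complex.star_def]
      try ring
    simp only [he] at h
    rw [← Complex.ofReal_sum] at h
    have h1e : (1 : Matrix (Fin 2) (Fin 2) ℂ) 0 0 = 1 := by simp
    rw [h1e] at h
    exact_mod_cast h
  have hnorm11 : ∑ i, (Complex.normSq (K i 0 1) + Complex.normSq (K i 1 1)) = 1 := by
    have h := congrFun (congrFun h1 1) 1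
    rw [Matrix.sum_apply] at h
    have he : ∀ i, ((K i)ᴴ * K i) 1 1
        = ((Complex.normSq (K i 0 1) + Complex.normSq (K i 1 1) : ℝ) : ℂ) := by
      intro i
      simp [Matrix.mul_apply, Matrix.conjTranspose_apply, Fin.sum_univ_two,
        Complex.ext_iff, Complex.normSq_apply, Complex.star_def]
      try ring
    simp only [he] at h
    rw [← Complex.ofReal_sum] at h
    have h1e : (1 : Matrix (Fin 2) (Fin 2) ℂ) 1 1 = 1 := by simp
    rw [h1e] at h
    exact_mod_cast h
  -- nonnegativity of α and β
  have hα0 : ∀ i, 0 ≤ α i := by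
    intro i
    have h2' : Complex.normSq ((K i 0 0) * conj (K i 0 1))
        = Complex.normSq (K i 0 0) * Complex.normSq (K i 0 1) := by
      rw [Complex.normSq_mul, Complex.normSq_conj]
    have hw : ((K i 0 0) * conj (K i 0 1)).re ^ 2
        ≤ Complex.normSq (K i 0 0) * Complex.normSq (K i 0 1) := by
      rw [← h2', Complex.normSq_apply]
      nlinarith [sq_nonneg (((K i 0 0) * conj (K i 0 1)).im)]
    have hx := Complex.normSq_nonneg (K i 0 0)
    have hy := Complex.normSq_nonneg (K i 0 1)
    have hf : 0 ≤ Complex.normSq (K i 0 0) * p + Complex.normSq (K i 0 1) * q :=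
      add_nonneg (mul_nonneg hx hp0) (mul_nonneg hy hq0)
    have key : ((K i 0 0) * conj (K i 0 1)).re ^ 2 * r ^ 2
        ≤ (Complex.normSq (K i 0 0) * Complex.normSq (K i 0 1)) * (4 * (p * q)) :=
      mul_le_mul hw hpq (sq_nonneg r) (mul_nonneg hx hy)
    simp only [hα_def]
    nlinarith [key, sq_nonneg (Complex.normSq (K i 0 0) * p - Complex.normSq (K i 0 1) * q), hf]
  have hβ0 : ∀ i, 0 ≤ β i := by
    intro i
    have h2' : Complex.normSq ((K i 1 0) * conj (K i 1 1))
        = Complex.normSq (K i 1 0) * Complex.normSq (K i 1 1) := by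
      rw [Complex.normSq_mul, Complex.normSq_conj]
    have hw : ((K i 1 0) * conj (K i 1 1)).re ^ 2
        ≤ Complex.normSq (K i 1 0) * Complex.normSq (K i 1 1) := by
      rw [← h2', Complex.normSq_apply]
      nlinarith [sq_nonneg (((K i 1 0) * conj (K i 1 1)).im)]
    have hx := Complex.normSq_nonneg (K i 1 0)
    have hy := Complex.normSq_nonneg (K i 1 1)
    have hf : 0 ≤ Complex.normSq (K i 1 0) * p + Complex.normSq (K i 1 1) * q :=
      add_nonneg (mul_nonneg hx hp0) (mul_nonneg hy hq0)
    have key : ((K i 1 0) * conj (K i 1 1)).re ^ 2 * r ^ 2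
        ≤ (Complex.normSq (K i 1 0) * Complex.normSq (K i 1 1)) * (4 * (p * q)) :=
      mul_le_mul hw hpq (sq_nonneg r) (mul_nonneg hx hy)
    simp only [hβ_def]
    nlinarith [key, sq_nonneg (Complex.normSq (K i 1 0) * p - Complex.normSq (K i 1 1) * q), hf]
  have hu0 : ∀ i, 0 ≤ u i := fun i => norm_nonneg _
  -- per-index key inequalities
  have F1 : ∀ i, u i ^ 2 * (p * q) ≤ α i * β i := by
    intro i
    rcases hAC i with h0 | h0 <;> rcases hBD i with h1' | h1' <;>
      simp only [hu_def, hα_def, hβ_def, hs_def, h0, h1', zero_mul, mul_zero,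
        Complex.normSq_zero, map_zero, star_zero, add_zero, zero_add, Complex.zero_re,
        Complex.sq_norm, Complex.normSq_mul, Complex.normSq_conj]
    · norm_num
    · exact le_of_eq (by ring)
    · exact le_of_eq (by ring)
    · norm_num
  have F2 : ∀ i, u i ^ 2 ≤ (Complex.normSq (K i 0 0) + Complex.normSq (K i 1 0))
      * (Complex.normSq (K i 0 1) + Complex.normSq (K i 1 1)) := by
    intro i
    rcases hAC i with h0 | h0 <;> rcases hBD i with h1' | h1' <;>
      simp only [hu_def, hs_def, h0, h1', zero_mul, mul_zero,
        Complex.normSq_zero, map_zero, star_zero, add_zero, zero_add,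
        Complex.sq_norm, Complex.normSq_mul, Complex.normSq_conj] <;>
      nlinarith [Complex.normSq_nonneg (K i 0 0), Complex.normSq_nonneg (K i 0 1),
        Complex.normSq_nonneg (K i 1 0), Complex.normSq_nonneg (K i 1 1)]

  have hsum_u0 : 0 ≤ ∑ i, u i := Finset.sum_nonneg fun i _ => hu0 i
  have hCS1 : (∑ i, Real.sqrt (α i) * Real.sqrt (β i)) ^ 2 ≤ ((1+z')/2) * ((1-z')/2) := by
    calc (∑ i, Real.sqrt (α i) * Real.sqrt (β i)) ^ 2
        ≤ (∑ i, Real.sqrt (α i) ^ 2) * (∑ i, Real.sqrt (β i) ^ 2) :=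
          Finset.sum_mul_sq_le_sq_mul_sq _ _ _
      _ = ((1+z')/2) * ((1-z')/2) := by
          rw [Finset.sum_congr rfl fun i _ => Real.sq_sqrt (hα0 i),
            Finset.sum_congr rfl fun i _ => Real.sq_sqrt (hβ0 i), hsumα, hsumβ]
  have hub : ∀ i, u i * Real.sqrt (p*q) ≤ Real.sqrt (α i) * Real.sqrt (β i) := by
    intro i
    have h1' : u i * Real.sqrt (p*q) = Real.sqrt (u i ^ 2 * (p*q)) := by
      rw [Real.sqrt_mul (sq_nonneg _), Real.sqrt_sq (hu0 i)]
    rw [h1', ← Real.sqrt_mul (hα0 i)]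
    exact Real.sqrt_le_sqrt (F1 i)
  have hkey1 : (∑ i, u i) ^ 2 * (p * q) ≤ ((1+z')/2) * ((1-z')/2) := by
    have hsum := Finset.sum_le_sum (fun i (_ : i ∈ Finset.univ) => hub i)
    rw [← Finset.sum_mul] at hsum
    have h0 : 0 ≤ (∑ i, u i) * Real.sqrt (p*q) := mul_nonneg hsum_u0 (Real.sqrt_nonneg _)
    calc (∑ i, u i)^2 * (p*q) = ((∑ i, u i) * Real.sqrt (p*q))^2 := by
          rw [mul_pow, Real.sq_sqrt (mul_nonneg hp0 hq0)]
      _ ≤ (∑ i, Real.sqrt (α i) * Real.sqrt (β i))^2 := pow_le_pow_left₀ h0 hsum 2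
      _ ≤ _ := hCS1
  have hU1 : (∑ i, u i) ≤ 1 := by
    have hgb : ∀ i, u i ≤ Real.sqrt (Complex.normSq (K i 0 0) + Complex.normSq (K i 1 0))
        * Real.sqrt (Complex.normSq (K i 0 1) + Complex.normSq (K i 1 1)) := by
      intro i
      calc u i = Real.sqrt (u i ^ 2) := (Real.sqrt_sq (hu0 i)).symm
        _ ≤ Real.sqrt ((Complex.normSq (K i 0 0) + Complex.normSq (K i 1 0))
              * (Complex.normSq (K i 0 1) + Complex.normSq (K i 1 1))) :=
            Real.sqrt_le_sqrt (F2 i)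
        _ = _ := Real.sqrt_mul (add_nonneg (Complex.normSq_nonneg _) (Complex.normSq_nonneg _)) _
    have hsum := Finset.sum_le_sum (fun i (_ : i ∈ Finset.univ) => hgb i)
    have hCS2 : (∑ i, Real.sqrt (Complex.normSq (K i 0 0) + Complex.normSq (K i 1 0))
        * Real.sqrt (Complex.normSq (K i 0 1) + Complex.normSq (K i 1 1))) ^ 2 ≤ 1 := by
      calc (∑ i, Real.sqrt (Complex.normSq (K i 0 0) + Complex.normSq (K i 1 0))
            * Real.sqrt (Complex.normSq (K i 0 1) + Complex.normSq (K i 1 1))) ^ 2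
          ≤ (∑ i, Real.sqrt (Complex.normSq (K i 0 0) + Complex.normSq (K i 1 0)) ^ 2)
            * (∑ i, Real.sqrt (Complex.normSq (K i 0 1) + Complex.normSq (K i 1 1)) ^ 2) :=
            Finset.sum_mul_sq_le_sq_mul_sq _ _ _
        _ ≤ 1 := by
            rw [Finset.sum_congr rfl fun i _ => Real.sq_sqrt
                (add_nonneg (Complex.normSq_nonneg _) (Complex.normSq_nonneg _)),
              Finset.sum_congr rfl fun i _ => Real.sq_sqrt
                (add_nonneg (Complex.normSq_nonneg _) (Complex.normSq_nonneg _)),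
              hnorm00, hnorm11]
            norm_num
    have hg0 : 0 ≤ ∑ i, Real.sqrt (Complex.normSq (K i 0 0) + Complex.normSq (K i 1 0))
        * Real.sqrt (Complex.normSq (K i 0 1) + Complex.normSq (K i 1 1)) :=
      Finset.sum_nonneg fun i _ => mul_nonneg (Real.sqrt_nonneg _) (Real.sqrt_nonneg _)
    nlinarith [hsum, hCS2, hg0]
  have habs : |r| * ‖∑ i, s i‖ = |r'| := by
    have := congrArg (‖·‖) hsums
    simpa [norm_mul, Complex.norm_real, Real.norm_eq_abs] using this
  have htri : ‖∑ i, s i‖ ≤ ∑ i, u i := by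
    simpa [hu_def] using norm_sum_le Finset.univ s
  constructor
  · have hsq : r'^2 = r^2 * ‖∑ i, s i‖ ^ 2 := by
      rw [← sq_abs r', ← habs, mul_pow, sq_abs]
    have hm : ‖∑ i, s i‖^2 ≤ (∑ i, u i)^2 :=
      pow_le_pow_left₀ (norm_nonneg _) htri 2
    have h4 : 1 - z^2 = 4*(p*q) := by rw [hp_def, hq_def]; ring
    have h4' : 1 - z'^2 = 4*(((1+z')/2) * ((1-z')/2)) := by ring
    rw [hsq, h4, h4']
    have step1 : ‖∑ i, s i‖^2 * (p*q) ≤ ((1+z')/2)*((1-z')/2) :=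
      le_trans (mul_le_mul_of_nonneg_right hm (mul_nonneg hp0 hq0)) hkey1
    nlinarith [mul_le_mul_of_nonneg_left step1 (sq_nonneg r)]
  · rw [← habs]
    calc |r| * ‖∑ i, s i‖ ≤ |r| * 1 :=
        mul_le_mul_of_nonneg_left (le_trans htri hU1) (abs_nonneg r)
      _ = |r| := mul_one _


def Reach (z r z' r' : ℝ) : Prop :=
  ∃ (n : ℕ) (K : Fin n → Matrix (Fin 2) (Fin 2) ℂ),
    (∀ i, Incoherent (K i)) ∧ (∑ i, (K i)ᴴ * K i = 1) ∧
    ∑ i, K i * qubit z r * (K i)ᴴ = qubit z' r'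

lemma Incoherent.mul {K L : Matrix (Fin 2) (Fin 2) ℂ} (hK : Incoherent K)
    (hL : Incoherent L) : Incoherent (K * L) := by
  intro j i i' h h'
  rw [Matrix.mul_apply, Fin.sum_univ_two] at h h'
  by_cases h0 : L 0 j = 0
  · by_cases h1 : L 1 j = 0
    · simp [h0, h1] at h
    · simp only [h0, mul_zero, zero_add] at h h'
      exact hK 1 i i' (left_ne_zero_of_mul h) (left_ne_zero_of_mul h')
  · have h1 : L 1 j = 0 := by
      by_contra h1; exact absurd (hL j 0 1 h0 h1) (by decide)
    simp only [h1, mul_zero, add_zero] at h h'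
    exact hK 0 i i' (left_ne_zero_of_mul h) (left_ne_zero_of_mul h')

lemma reach_conj {z r z' r' z'' r'' : ℝ} (V : Matrix (Fin 2) (Fin 2) ℂ)
    (hV : Incoherent V) (hVH : Vᴴ = V) (hVV : V * V = 1)
    (hq : V * qubit z' r' * V = qubit z'' r'')
    (h : Reach z r z' r') : Reach z r z'' r'' := by
  obtain ⟨n, K, hi, h1, h2⟩ := h
  refine ⟨n, fun i => V * K i, fun i => hV.mul (hi i), ?_, ?_⟩
  · have e : ∀ i : Fin n, (V * K i)ᴴ * (V * K i) = (K i)ᴴ * K i := by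
      intro i
      rw [Matrix.conjTranspose_mul, hVH, Matrix.mul_assoc, ← Matrix.mul_assoc V,
        hVV, Matrix.one_mul]
    rw [Finset.sum_congr rfl fun i _ => e i, h1]
  · have e : ∀ i : Fin n, (V * K i) * qubit z r * (V * K i)ᴴ
        = V * (K i * qubit z r * (K i)ᴴ) * V := by
      intro i
      rw [Matrix.conjTranspose_mul, hVH]
      simp only [Matrix.mul_assoc]
    rw [Finset.sum_congr rfl fun i _ => e i, ← Finset.sum_mul, ← Finset.mul_sum, h2, hq]

lemma reach_pre {z r z' r' z'' r'' : ℝ} (V : Matrix (Fin 2) (Fin 2) ℂ)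
    (hV : Incoherent V) (hVH : Vᴴ = V) (hVV : V * V = 1)
    (hq : V * qubit z'' r'' * V = qubit z r)
    (h : Reach z r z' r') : Reach z'' r'' z' r' := by
  obtain ⟨n, K, hi, h1, h2⟩ := h
  refine ⟨n, fun i => K i * V, fun i => (hi i).mul hV, ?_, ?_⟩
  · have e : ∀ i : Fin n, (K i * V)ᴴ * (K i * V) = V * ((K i)ᴴ * K i) * V := by
      intro i
      rw [Matrix.conjTranspose_mul, hVH]
      simp only [Matrix.mul_assoc]
    rw [Finset.sum_congr rfl fun i _ => e i, ← Finset.sum_mul, ← Finset.mul_sum, h1,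
      Matrix.mul_one, hVV]
  · have e : ∀ i : Fin n, (K i * V) * qubit z'' r'' * (K i * V)ᴴ
        = K i * qubit z r * (K i)ᴴ := by
      intro i
      rw [Matrix.conjTranspose_mul, hVH, ← hq]
      simp only [Matrix.mul_assoc]
    rw [Finset.sum_congr rfl fun i _ => e i, h2]

def Umat : Matrix (Fin 2) (Fin 2) ℂ := !![1, 0; 0, -1]
def Xmat : Matrix (Fin 2) (Fin 2) ℂ := !![0, 1; 1, 0]

lemma Umat_inc : Incoherent Umat := by
  intro j i i' h h'
  fin_cases j <;> fin_cases i <;> fin_cases i' <;> simp_all [Umat]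
lemma Xmat_inc : Incoherent Xmat := by
  intro j i i' h h'
  fin_cases j <;> fin_cases i <;> fin_cases i' <;> simp_all [Xmat]
lemma Umat_H : Umatᴴ = Umat := by
  ext i j; fin_cases i <;> fin_cases j <;> simp [Umat]
lemma Xmat_H : Xmatᴴ = Xmat := by
  ext i j; fin_cases i <;> fin_cases j <;> simp [Xmat]
lemma Umat_sq : Umat * Umat = 1 := by
  ext i j; fin_cases i <;> fin_cases j <;>
    simp [Umat, Matrix.mul_apply, Fin.sum_univ_two]
lemma Xmat_sq : Xmat * Xmat = 1 := by
  ext i j; fin_cases i <;> fin_cases j <;>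
    simp [Xmat, Matrix.mul_apply, Fin.sum_univ_two]
lemma Umat_conj (z r : ℝ) : Umat * qubit z r * Umat = qubit z (-r) := by
  ext i j; fin_cases i <;> fin_cases j <;>
    (simp [Umat, qubit, Matrix.mul_apply, Fin.sum_univ_two]; try push_cast; try ring)
lemma Xmat_conj (z r : ℝ) : Xmat * qubit z r * Xmat = qubit (-z) r := by
  ext i j; fin_cases i <;> fin_cases j <;>
    (simp [Xmat, qubit, Matrix.mul_apply, Fin.sum_univ_two]; try push_cast; try ring)

lemma reach_neg_r_out {z r z' r' : ℝ} (h : Reach z r z' r') : Reach z r z' (-r') :=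
  reach_conj Umat Umat_inc Umat_H Umat_sq (Umat_conj z' r') h
lemma reach_neg_r_in {z r z' r' : ℝ} (h : Reach z r z' r') : Reach z (-r) z' r' :=
  reach_pre Umat Umat_inc Umat_H Umat_sq (by rw [Umat_conj, neg_neg]) h
lemma reach_neg_z {z r z' r' : ℝ} (h : Reach z r z' r') : Reach (-z) r (-z') r' :=
  reach_pre Xmat Xmat_inc Xmat_H Xmat_sq (by rw [Xmat_conj, neg_neg])
    (reach_conj Xmat Xmat_inc Xmat_H Xmat_sq (Xmat_conj z' r') h)

lemma inc_diag (x y : ℂ) : Incoherent !![x, 0; 0, y] := by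
  intro j k k' h h'
  fin_cases j <;> fin_cases k <;> fin_cases k' <;> simp_all
lemma inc_anti (x y : ℂ) : Incoherent !![0, x; y, 0] := by
  intro j k k' h h'
  fin_cases j <;> fin_cases k <;> fin_cases k' <;> simp_all

lemma reach_schema (z r z' r' X Y t : ℝ)
    (hX0 : 0 ≤ X) (hX1 : X ≤ 1) (hY0 : 0 ≤ Y) (hY1 : Y ≤ 1)
    (ht0 : 0 ≤ t) (ht1 : t ≤ 1)
    (h00 : X * ((1+z)/2) + Y * ((1-z)/2) = (1+z')/2)
    (hr : t * (Real.sqrt X * Real.sqrt (1-Y) + Real.sqrt Y * Real.sqrt (1-X)) * r = r') :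
    Reach z r z' r' := by
  set a := Real.sqrt X with ha_def
  set b := Real.sqrt (1-Y) with hb_def
  set c := Real.sqrt (1-X) with hc_def
  set d := Real.sqrt Y with hd_def
  set st := Real.sqrt t with hst_def
  set s1 := Real.sqrt (1-t) with hs1_def
  have ha : a * a = X := Real.mul_self_sqrt hX0
  have hb : b * b = 1 - Y := Real.mul_self_sqrt (by linarith)
  have hc : c * c = 1 - X := Real.mul_self_sqrt (by linarith)
  have hd : d * d = Y := Real.mul_self_sqrt hY0
  have hst : st * st = t := Real.mul_self_sqrt ht0
  have hs1 : s1 * s1 = 1 - t := Real.mul_self_sqrt (by linarith)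
  have haC : (a:ℂ)*a = (X:ℂ) := by exact_mod_cast ha
  have hbC : (b:ℂ)*b = 1-(Y:ℂ) := by have := congrArg (Complex.ofReal) hb; push_cast at this; linear_combination this
  have hcC : (c:ℂ)*c = 1-(X:ℂ) := by have := congrArg (Complex.ofReal) hc; push_cast at this; linear_combination this
  have hdC : (d:ℂ)*d = (Y:ℂ) := by exact_mod_cast hd
  have hstC : (st:ℂ)*st = (t:ℂ) := by exact_mod_cast hst
  have hs1C : (s1:ℂ)*s1 = 1-(t:ℂ) := by have := congrArg (Complex.ofReal) hs1; push_cast at this; linear_combination this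
  have h00C : (X:ℂ) * ((1+(z:ℂ))/2) + (Y:ℂ) * ((1-(z:ℂ))/2) = (1+(z':ℂ))/2 := by
    exact_mod_cast h00
  have hrC : (t:ℂ) * ((a:ℂ)*b + (d:ℂ)*c) * r = (r':ℂ) := by exact_mod_cast hr
  set Ks : Fin 6 → Matrix (Fin 2) (Fin 2) ℂ := ![!![((st*a : ℝ) : ℂ), 0; 0, ((st*b : ℝ) : ℂ)],
    !![0, ((st*d : ℝ) : ℂ); ((st*c : ℝ) : ℂ), 0],
    !![((s1*a : ℝ) : ℂ), 0; 0, 0],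
    !![0, 0; 0, ((s1*b : ℝ) : ℂ)],
    !![0, ((s1*d : ℝ) : ℂ); 0, 0],
    !![0, 0; ((s1*c : ℝ) : ℂ), 0]] with hKs_def
  have hK0 : Ks 0 = !![((st*a : ℝ) : ℂ), 0; 0, ((st*b : ℝ) : ℂ)] := rfl
  have hK1 : Ks 1 = !![0, ((st*d : ℝ) : ℂ); ((st*c : ℝ) : ℂ), 0] := rfl
  have hK2 : Ks 2 = !![((s1*a : ℝ) : ℂ), 0; 0, 0] := rfl
  have hK3 : Ks 3 = !![0, 0; 0, ((s1*b : ℝ) : ℂ)] := rfl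
  have hK4 : Ks 4 = !![0, ((s1*d : ℝ) : ℂ); 0, 0] := rfl
  have hK5 : Ks 5 = !![0, 0; ((s1*c : ℝ) : ℂ), 0] := rfl
  refine ⟨6, Ks, ?_, ?_, ?_⟩
  · intro i
    fin_cases i
    · exact inc_diag _ _
    · exact inc_anti _ _
    · exact inc_diag _ _
    · exact inc_diag _ _
    · exact inc_anti _ _
    · exact inc_anti _ _
  · ext i j
    rw [Matrix.sum_apply]
    rw [Fin.sum_univ_six]
    rw [hK0, hK1, hK2, hK3, hK4, hK5]
    fin_cases i <;> fin_cases j <;>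
      simp [Matrix.mul_apply, Fin.sum_univ_two,
        Matrix.conjTranspose_apply, Complex.star_def, Matrix.one_apply] <;>
      push_cast <;>
      first
        | linear_combination ((a:ℂ)*a+(c:ℂ)*c)*hstC + ((a:ℂ)*a+(c:ℂ)*c)*hs1C + haC + hcC
        | linear_combination ((b:ℂ)*b+(d:ℂ)*d)*hstC + ((b:ℂ)*b+(d:ℂ)*d)*hs1C + hbC + hdC
  · ext i j
    rw [Matrix.sum_apply]
    rw [Fin.sum_univ_six]
    rw [hK0, hK1, hK2, hK3, hK4, hK5]
    fin_cases i <;> fin_cases j <;>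
      simp [Matrix.mul_apply, Fin.sum_univ_two,
        Matrix.conjTranspose_apply, Complex.star_def, qubit] <;>
      push_cast <;>
      first
        | linear_combination ((a:ℂ)*a*((1+(z:ℂ))/2) + (d:ℂ)*d*((1-(z:ℂ))/2))*hstC
            + ((a:ℂ)*a*((1+(z:ℂ))/2) + (d:ℂ)*d*((1-(z:ℂ))/2))*hs1C
            + ((1+(z:ℂ))/2)*haC + ((1-(z:ℂ))/2)*hdC + h00C
        | linear_combination (((a:ℂ)*b+(d:ℂ)*c)*(r:ℂ)/2)*hstC + hrC/2
        | linear_combination ((b:ℂ)*b*((1-(z:ℂ))/2) + (c:ℂ)*c*((1+(z:ℂ))/2))*hstC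
            + ((b:ℂ)*b*((1-(z:ℂ))/2) + (c:ℂ)*c*((1+(z:ℂ))/2))*hs1C
            + ((1-(z:ℂ))/2)*hbC + ((1+(z:ℂ))/2)*hcC - h00C

lemma caseA (z r z' r' : ℝ) (hz : |z'| ≤ |z|) (hr0 : 0 ≤ r') (hrr : r' ≤ r) :
    Reach z r z' r' := by
  have hr0' : 0 ≤ r := le_trans hr0 hrr
  set X := (z+z')/(2*z) with hX_def
  have hXb : 0 ≤ X ∧ X ≤ 1 := by
    rcases lt_trichotomy z 0 with hlt | heq | hgt
    · have h1 : -(-z) ≤ z' ∧ z' ≤ -z := abs_le.mp (le_trans hz (le_of_eq (abs_of_neg hlt)))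
      have e : X = (-(z+z'))/(-(2*z)) := by rw [hX_def, neg_div_neg_eq]
      constructor
      · rw [e]; exact div_nonneg (by linarith [h1.2]) (by linarith)
      · rw [e]; exact (div_le_one (by linarith)).mpr (by linarith [h1.1])
    · have hz' : z' = 0 := by
        have := le_trans hz (le_of_eq (by rw [heq, abs_zero]))
        simpa [abs_nonpos_iff] using this
      rw [hX_def, heq, hz']; norm_num
    · have h1 : -z ≤ z' ∧ z' ≤ z := abs_le.mp (le_trans hz (le_of_eq (abs_of_pos hgt)))
      constructor
      · rw [hX_def]; exact div_nonneg (by linarith [h1.1]) (by linarith)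
      · rw [hX_def]; exact (div_le_one (by linarith)).mpr (by linarith [h1.2])
  have h00 : X * ((1+z)/2) + (1-X) * ((1-z)/2) = (1+z')/2 := by
    rcases eq_or_ne z 0 with heq | hne
    · have hz' : z' = 0 := by
        have := le_trans hz (le_of_eq (by rw [heq, abs_zero]))
        simpa [abs_nonpos_iff] using this
      rw [hX_def, heq, hz']; norm_num
    · rw [hX_def]; field_simp; ring
  have hrgoal : (r'/r) * (Real.sqrt X * Real.sqrt (1-(1-X))
      + Real.sqrt (1-X) * Real.sqrt (1-X)) * r = r' := by
    have e1 : (1:ℝ) - (1 - X) = X := by ring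
    rw [e1, Real.mul_self_sqrt hXb.1, Real.mul_self_sqrt (by linarith [hXb.2])]
    rcases eq_or_ne r 0 with h | h
    · have : r' = 0 := le_antisymm (h ▸ hrr) hr0
      simp [this, h]
    · field_simp; ring
  exact reach_schema z r z' r' X (1-X) (r'/r) hXb.1 hXb.2 (by linarith [hXb.2])
    (by linarith [hXb.1]) (div_nonneg hr0 hr0') (div_le_one_of_le₀ hrr hr0') h00 hrgoal

set_option maxHeartbeats 2000000 in
lemma caseB (z r z' r' : ℝ) (hz : |z| < z') (hz1 : z' ≤ 1) (hr0 : 0 ≤ r) (hr'0 : 0 ≤ r')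
    (hC1 : r'^2*(1-z^2) ≤ r^2*(1-z'^2)) : Reach z r z' r' := by
  have hza := abs_lt.mp hz
  have hz'0 : 0 < z' := lt_of_le_of_lt (abs_nonneg z) hz
  have hp : 0 < (1+z)/2 := by linarith [hza.1]
  have hq : 0 < (1-z)/2 := by linarith [hza.2]
  have hp1 : (0:ℝ) < 1 + z := by linarith [hza.1]
  have hq1 : (0:ℝ) < 1 - z := by linarith [hza.2]
  have hp' : 0 < (1+z')/2 := by linarith
  have hq' : 0 ≤ (1-z')/2 := by linarith
  set X := (1+z')*(z+z')/(2*(1+z)*z') with hX_def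
  set Y := (1+z')*(z'-z)/(2*(1-z)*z') with hY_def
  have hdenX : (0:ℝ) < 2*(1+z)*z' := by positivity
  have hdenY : (0:ℝ) < 2*(1-z)*z' := by positivity
  have hX0 : 0 ≤ X := by
    rw [hX_def]; exact div_nonneg (mul_nonneg (by linarith) (by linarith [hza.1])) hdenX.le
  have hX1 : X ≤ 1 := by
    rw [hX_def]
    exact (div_le_one hdenX).mpr (by nlinarith [mul_nonneg (by linarith [hza.2] : (0:ℝ) ≤ z'-z) (by linarith : (0:ℝ) ≤ 1-z')])
  have hY0 : 0 ≤ Y := by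
    rw [hY_def]; exact div_nonneg (mul_nonneg (by linarith) (by linarith [hza.2])) hdenY.le
  have hY1 : Y ≤ 1 := by
    rw [hY_def]
    exact (div_le_one hdenY).mpr (by nlinarith [mul_nonneg (by linarith [hza.1] : (0:ℝ) ≤ z+z') (by linarith : (0:ℝ) ≤ 1-z')])
  set t := r' * Real.sqrt (((1+z)/2)*((1-z)/2)) / (r * Real.sqrt (((1+z')/2)*((1-z')/2)))
    with ht_def
  have ht0 : 0 ≤ t := by
    rw [ht_def]
    exact div_nonneg (mul_nonneg hr'0 (Real.sqrt_nonneg _))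
      (mul_nonneg hr0 (Real.sqrt_nonneg _))
  have ht1 : t ≤ 1 := by
    rw [ht_def]
    apply div_le_one_of_le₀ _ (mul_nonneg hr0 (Real.sqrt_nonneg _))
    have h1 : Real.sqrt (r'^2*(((1+z)/2)*((1-z)/2)))
        ≤ Real.sqrt (r^2*(((1+z')/2)*((1-z')/2))) :=
      Real.sqrt_le_sqrt (by linarith [hC1])
    rwa [Real.sqrt_mul (sq_nonneg r') , Real.sqrt_sq hr'0,
      Real.sqrt_mul (sq_nonneg r), Real.sqrt_sq hr0] at h1
  have hzne : z' ≠ 0 := ne_of_gt hz'0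
  have h00 : X * ((1+z)/2) + Y * ((1-z)/2) = (1+z')/2 := by
    rw [hX_def, hY_def]; field_simp; ring
  have hrz : r = 0 → r' = 0 := by
    intro hre
    rw [hre] at hC1
    have h2 : r'^2*(1-z^2) ≤ 0 := by nlinarith [hC1]
    have h3 : r'^2 ≤ 0 := by nlinarith [mul_pos hp1 hq1]
    exact pow_eq_zero_iff two_ne_zero |>.mp (le_antisymm h3 (sq_nonneg r'))
  have hq'z : ((1+z')/2)*((1-z')/2) = 0 → r' = 0 := by
    intro hqe
    have e : 1 - z'^2 = 4*(((1+z')/2)*((1-z')/2)) := by ring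
    rw [e, hqe] at hC1
    have h2 : r'^2*(1-z^2) ≤ 0 := by nlinarith [hC1]
    have h3 : r'^2 ≤ 0 := by nlinarith [mul_pos hp1 hq1]
    exact pow_eq_zero_iff two_ne_zero |>.mp (le_antisymm h3 (sq_nonneg r'))
  -- the coherence factor
  have hXX0 : 0 ≤ X*(1-X) := mul_nonneg hX0 (by linarith)
  have hYY0 : 0 ≤ Y*(1-Y) := mul_nonneg hY0 (by linarith)
  have hI1 : X*(1-X)*((1+z)/2)^2 = Y*(1-Y)*((1-z)/2)^2 := by
    rw [hX_def, hY_def]; field_simp; ring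
  have hcr1 : Real.sqrt (X*(1-X))*((1+z)/2) = Real.sqrt (Y*(1-Y))*((1-z)/2) := by
    have e1 : Real.sqrt (X*(1-X)*((1+z)/2)^2) = Real.sqrt (Y*(1-Y)*((1-z)/2)^2) := by
      rw [hI1]
    rwa [Real.sqrt_mul hXX0, Real.sqrt_sq hp.le, Real.sqrt_mul hYY0,
      Real.sqrt_sq hq.le] at e1
  have hSY : Real.sqrt (Y*(1-Y)) * Real.sqrt (Y*(1-Y)) = Y*(1-Y) :=
    Real.mul_self_sqrt hYY0
  have hcross : (Real.sqrt X*Real.sqrt (1-X))*(Real.sqrt Y*Real.sqrt (1-Y))*((1+z)/2)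
      = Y*(1-Y)*((1-z)/2) := by
    rw [← Real.sqrt_mul hX0, ← Real.sqrt_mul hY0]
    linear_combination Real.sqrt (Y*(1-Y))*hcr1 + ((1-z)/2)*hSY
  have hsx := Real.mul_self_sqrt hX0
  have hsy := Real.mul_self_sqrt hY0
  have hs1x := Real.mul_self_sqrt (by linarith : (0:ℝ) ≤ 1-X)
  have hs1y := Real.mul_self_sqrt (by linarith : (0:ℝ) ≤ 1-Y)
  have hId : (X*(1-Y) + Y*(1-X))*(((1+z)/2)*((1-z)/2)) + 2*(Y*(1-Y))*((1-z)/2)^2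
      = ((1+z')/2)*((1-z')/2) := by
    rw [hX_def, hY_def]; field_simp; ring
  set M := Real.sqrt X * Real.sqrt (1-Y) + Real.sqrt Y * Real.sqrt (1-X) with hM_def
  have hM2 : M^2*(((1+z)/2)*((1-z)/2)) = ((1+z')/2)*((1-z')/2) := by
    rw [hM_def]
    linear_combination (Real.sqrt (1-Y)*Real.sqrt (1-Y)*(((1+z)/2)*((1-z)/2)))*hsx
      + (X*(((1+z)/2)*((1-z)/2)))*hs1y
      + (Real.sqrt (1-X)*Real.sqrt (1-X)*(((1+z)/2)*((1-z)/2)))*hsy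
      + (Y*(((1+z)/2)*((1-z)/2)))*hs1x
      + (2*((1-z)/2))*hcross + hId
  have hM0 : 0 ≤ M := by rw [hM_def]; positivity
  have hPQ0 : (0:ℝ) < ((1+z)/2)*((1-z)/2) := mul_pos hp hq
  have hMs : M * Real.sqrt (((1+z)/2)*((1-z)/2)) = Real.sqrt (((1+z')/2)*((1-z')/2)) := by
    have h2 : (M * Real.sqrt (((1+z)/2)*((1-z)/2)))^2 = ((1+z')/2)*((1-z')/2) := by
      rw [mul_pow, Real.sq_sqrt hPQ0.le]; exact hM2
    calc M * Real.sqrt (((1+z)/2)*((1-z)/2))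
        = Real.sqrt ((M * Real.sqrt (((1+z)/2)*((1-z)/2)))^2) :=
          (Real.sqrt_sq (mul_nonneg hM0 (Real.sqrt_nonneg _))).symm
      _ = _ := by rw [h2]
  have hrgoal : t * M * r = r' := by
    rcases eq_or_ne r 0 with hr | hr
    · simp [hr, hrz hr]
    rcases eq_or_ne (((1+z')/2)*((1-z')/2)) 0 with hq'0 | hq'0
    · rw [ht_def, hq'z hq'0]; simp
    · have hsq' : Real.sqrt (((1+z')/2)*((1-z')/2)) ≠ 0 := by
        rw [Real.sqrt_ne_zero' ]
        rcases lt_or_eq_of_le (mul_nonneg hp'.le hq') with h | h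
        · exact h
        · exact absurd h.symm hq'0
      rw [ht_def, div_mul_eq_mul_div, div_mul_eq_mul_div,
        div_eq_iff (mul_ne_zero hr hsq')]
      linear_combination (r'*r)*hMs
  exact reach_schema z r z' r' X Y t hX0 hX1 hY0 hY1 ht0 ht1 h00 (hM_def ▸ hrgoal)

lemma sufficiency (z r z' r' : ℝ) (hzr' : z' ^ 2 + r' ^ 2 ≤ 1)
    (hC1 : r' ^ 2 * (1 - z ^ 2) ≤ r ^ 2 * (1 - z' ^ 2)) (hC2 : |r'| ≤ |r|) :
    Reach z r z' r' := by
  have core : ∀ z z' r r' : ℝ, 0 ≤ r → 0 ≤ r' → -1 ≤ z' → z' ≤ 1 →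
      r' ^ 2 * (1 - z ^ 2) ≤ r ^ 2 * (1 - z' ^ 2) → r' ≤ r → Reach z r z' r' := by
    intro z z' r r' hr0 hr'0 hzm1 hz1 hC1' hC2'
    rcases le_or_gt (|z'|) (|z|) with h | h
    · exact caseA _ _ _ _ h hr'0 hC2'
    · rcases le_or_gt 0 z' with hz'0 | hz'0
      · have hlt : |z| < z' := by rwa [abs_of_nonneg hz'0] at h
        exact caseB _ _ _ _ hlt hz1 hr0 hr'0 hC1'
      · have h1 : |(-z)| < -z' := by rw [abs_neg]; rwa [abs_of_neg hz'0] at h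
        have hB := caseB (-z) r (-z') r' h1 (by linarith) hr0 hr'0
          (by rw [neg_sq, neg_sq]; exact hC1')
        have h2 := reach_neg_z hB
        rwa [neg_neg, neg_neg] at h2
  have hz'sq : z' ^ 2 ≤ 1 ^ 2 := by nlinarith [sq_nonneg r']
  have hz'b := abs_le_of_sq_le_sq' hz'sq one_pos.le
  rcases le_or_gt 0 r with hr | hr <;> rcases le_or_gt 0 r' with hr' | hr'
  · exact core z z' r r' hr hr' hz'b.1 hz'b.2 hC1
      (by rwa [abs_of_nonneg hr, abs_of_nonneg hr'] at hC2)
  · have h0 := core z z' r (-r') hr (by linarith) hz'b.1 hz'b.2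
      (by rw [neg_pow]; ring_nf; ring_nf at hC1; linarith)
      (by rw [abs_of_nonneg hr, abs_of_neg hr'] at hC2; linarith)
    have h2 := reach_neg_r_out h0
    rwa [neg_neg] at h2
  · have h0 := core z z' (-r) r' (by linarith) hr' hz'b.1 hz'b.2
      (by rw [neg_pow]; ring_nf; ring_nf at hC1; linarith)
      (by rw [abs_of_neg hr, abs_of_nonneg hr'] at hC2; linarith)
    have h2 := reach_neg_r_in h0
    rwa [neg_neg] at h2
  · have h0 := core z z' (-r) (-r') (by linarith) (by linarith) hz'b.1 hz'b.2
      (by rw [neg_pow, neg_pow]; ring_nf; ring_nf at hC1; linarith)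
      (by rw [abs_of_neg hr, abs_of_neg hr'] at hC2; linarith)
    have h2 := reach_neg_r_out (reach_neg_r_in h0)
    rwa [neg_neg, neg_neg] at h2

/-- Theorem 2: `ρ(z',r')` is reachable from `ρ(z,r)` by an incoherent operation iff
`r'²(1-z²) ≤ r²(1-z'²)` and `|r'| ≤ |r|`. -/
theorem io_transformation_region (z r z' r' : ℝ)
    (hzr : z ^ 2 + r ^ 2 ≤ 1) (hzr' : z' ^ 2 + r' ^ 2 ≤ 1) :
    (∃ (n : ℕ) (K : Fin n → Matrix (Fin 2) (Fin 2) ℂ),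
      (∀ i, Incoherent (K i)) ∧ (∑ i, (K i)ᴴ * K i = 1) ∧
      ∑ i, K i * qubit z r * (K i)ᴴ = qubit z' r') ↔
    r' ^ 2 * (1 - z ^ 2) ≤ r ^ 2 * (1 - z' ^ 2) ∧ |r'| ≤ |r| := by
  constructor
  · rintro ⟨n, K, hinc, h1, h2⟩
    exact necessity z r z' r' hzr n K hinc h1 h2
  · rintro ⟨hC1, hC2⟩
    exact sufficiency z r z' r' hzr' hC1 hC2
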